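/- The quantity K₊¹(e) := (1/2)(A₁(e) + B₁(e)) is strictly negative for all 0 < e < 1, where A₁, B₁ are built from the Bessel function J₁ as in the stated definitions. -/

import Mathlib

open Real Set

/-- Bessel function of the first kind of integer order `m`, defined by its
everywhere-convergent power series. -/
noncomputable def besselJ (m : ℕ) (x : ℝ) : ℝ :=
  ∑' j : ℕ, (-1 : ℝ) ^ j * (x / 2) ^ (2 * j + m) /
    ((Nat.factorial j : ℝ) * (Nat.factorial (j + m) : ℝ))

/-- `Aₘ(e) = (4/(m²e²))[2me(1−e²)Jₘ'(me) − (2−e²)Jₘ(me)]`. -/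
noncomputable def besselA (m : ℕ) (e : ℝ) : ℝ :=
  (4 / ((m : ℝ) ^ 2 * e ^ 2)) *
    (2 * (m : ℝ) * e * (1 - e ^ 2) * deriv (besselJ m) ((m : ℝ) * e)
      - (2 - e ^ 2) * besselJ m ((m : ℝ) * e))

/-- `Bₘ(e) = −(8/(m²e²))√(1−e²)[e Jₘ'(me) − m(1−e²)Jₘ(me)]`. -/
noncomputable def besselB (m : ℕ) (e : ℝ) : ℝ :=
  -(8 / ((m : ℝ) ^ 2 * e ^ 2)) * Real.sqrt (1 - e ^ 2) *
    (e * deriv (besselJ m) ((m : ℝ) * e)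
      - (m : ℝ) * (1 - e ^ 2) * besselJ m ((m : ℝ) * e))

/-- `K₊ᵐ(e) = (m/2)(Aₘ(e) + Bₘ(e))`. -/
noncomputable def Kplus (m : ℕ) (e : ℝ) : ℝ :=
  ((m : ℝ) / 2) * (besselA m e + besselB m e)

noncomputable def bterm (j : ℕ) (x : ℝ) : ℝ :=
  (-1 : ℝ) ^ j * (x / 2) ^ (2 * j + 1) /
    ((Nat.factorial j : ℝ) * (Nat.factorial (j + 1) : ℝ))

noncomputable def bterm' (j : ℕ) (x : ℝ) : ℝ :=
  (-1 : ℝ) ^ j * ((2 * j + 1) * (x / 2) ^ (2 * j) * (1 / 2)) /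
    ((Nat.factorial j : ℝ) * (Nat.factorial (j + 1) : ℝ))

lemma bterm_hasDerivAt (j : ℕ) (x : ℝ) : HasDerivAt (bterm j) (bterm' j x) x := by
  have h1 : HasDerivAt (fun y : ℝ => y / 2) (1 / 2) x := by
    simpa using (hasDerivAt_id x).div_const 2
  have h2 : HasDerivAt (fun y : ℝ => (y / 2) ^ (2 * j + 1))
      (((2 * j + 1 : ℕ) : ℝ) * (x / 2) ^ (2 * j) * (1 / 2)) x := by
    simpa using h1.fun_pow (2 * j + 1)
  have h3 := (h2.const_mul ((-1 : ℝ) ^ j)).div_const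
    ((Nat.factorial j : ℝ) * (Nat.factorial (j + 1) : ℝ))
  convert h3 using 1
  · rfl
  · rfl
  · rfl
  unfold bterm'
  push_cast
  ring

lemma fact_cast_one_le (j : ℕ) : (1 : ℝ) ≤ (Nat.factorial j : ℝ) := by
  exact_mod_cast Nat.one_le_iff_ne_zero.mpr (Nat.factorial_ne_zero j)

lemma fact_prod_one_le (j k : ℕ) :
    (1 : ℝ) ≤ (Nat.factorial j : ℝ) * (Nat.factorial k : ℝ) :=
  one_le_mul_of_one_le_of_one_le (fact_cast_one_le j) (fact_cast_one_le k)

lemma abs_bterm (j : ℕ) (x : ℝ) (hx : 0 ≤ x) :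
    |bterm j x| = (x / 2) ^ (2 * j + 1) /
      ((Nat.factorial j : ℝ) * (Nat.factorial (j + 1) : ℝ)) := by
  have hx2 : 0 ≤ x / 2 := by linarith
  have hc : (0:ℝ) < (Nat.factorial j : ℝ) * (Nat.factorial (j + 1) : ℝ) := by
    positivity
  rw [bterm, abs_div, abs_mul, abs_pow, abs_pow, abs_neg, abs_one, one_pow, one_mul,
    abs_of_nonneg hx2, abs_of_pos hc]

lemma abs_bterm' (j : ℕ) (x : ℝ) :
    |bterm' j x| = ((2 * j + 1) * |x / 2| ^ (2 * j) * (1 / 2)) /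
      ((Nat.factorial j : ℝ) * (Nat.factorial (j + 1) : ℝ)) := by
  have hc : (0:ℝ) < (Nat.factorial j : ℝ) * (Nat.factorial (j + 1) : ℝ) := by
    positivity
  have h2j : (0:ℝ) ≤ 2 * (j:ℝ) + 1 := by positivity
  rw [bterm', abs_div, abs_mul, abs_mul, abs_mul, abs_pow, abs_pow, abs_neg, abs_one,
    one_pow, one_mul, abs_of_nonneg h2j, abs_of_pos hc,
    abs_of_pos (show (0:ℝ) < 1/2 by norm_num)]

lemma abs_bterm'_le (j : ℕ) (x : ℝ) (hx : |x| ≤ 2) :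
    ‖bterm' j x‖ ≤ 1 / (Nat.factorial j : ℝ) := by
  have hx2 : |x / 2| ≤ 1 := by rw [abs_div]; simp; linarith [abs_nonneg x]
  have hpow : |x / 2| ^ (2 * j) ≤ 1 := pow_le_one₀ (abs_nonneg _) hx2
  have hc : (0:ℝ) < (Nat.factorial j : ℝ) * (Nat.factorial (j + 1) : ℝ) := by positivity
  rw [Real.norm_eq_abs, abs_bterm']
  have h1 : ((2 * j + 1) * |x / 2| ^ (2 * j) * (1 / 2)) ≤ (2 * j + 1) * 1 * (1/2) := by
    gcongr
  refine le_trans ((div_le_div_iff_of_pos_right hc).mpr h1) ?_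
  rw [div_le_div_iff₀ hc (by positivity)]
  have hfj : (0:ℝ) < (Nat.factorial j : ℝ) := by positivity
  have hfact : ((2 * j + 2 : ℕ) : ℝ) ≤ (Nat.factorial (j+1) : ℝ) * 2 := by
    have : 2 * j + 2 ≤ Nat.factorial (j + 1) * 2 := by
      have h := Nat.self_le_factorial (j + 1)
      nlinarith [h]
    exact_mod_cast this
  push_cast at hfact ⊢
  nlinarith [hfj]

lemma summable_u : Summable (fun j : ℕ => 1 / (Nat.factorial j : ℝ)) := by
  simpa using Real.summable_pow_div_factorial 1

lemma summable_bterm' (x : ℝ) (hx : |x| ≤ 2) : Summable (fun j => bterm' j x) :=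
  Summable.of_norm_bounded summable_u (fun j => abs_bterm'_le j x hx)

lemma summable_bterm (x : ℝ) (hx : |x| ≤ 2) : Summable (fun j => bterm j x) := by
  refine Summable.of_norm_bounded summable_u (fun j => ?_)
  have hx2 : |x / 2| ≤ 1 := by rw [abs_div]; simp; linarith [abs_nonneg x]
  have hpow : |x / 2| ^ (2 * j + 1) ≤ 1 := pow_le_one₀ (abs_nonneg _) hx2
  have hc : (0:ℝ) < (Nat.factorial j : ℝ) * (Nat.factorial (j + 1) : ℝ) := by positivity
  rw [Real.norm_eq_abs, bterm, abs_div, abs_mul, abs_pow, abs_pow, abs_neg, abs_one,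
    one_pow, one_mul, abs_of_pos hc]
  calc |x / 2| ^ (2 * j + 1) / ((Nat.factorial j : ℝ) * (Nat.factorial (j + 1) : ℝ))
      ≤ 1 / ((Nat.factorial j : ℝ) * (Nat.factorial (j + 1) : ℝ)) := by gcongr
    _ ≤ 1 / (Nat.factorial j : ℝ) := by
        gcongr
        nlinarith [fact_cast_one_le j, fact_cast_one_le (j+1)]

lemma besselJ_one_eq (x : ℝ) : besselJ 1 x = ∑' j, bterm j x := by
  unfold besselJ bterm
  norm_num

lemma besselJ_one_hasDerivAt (x : ℝ) (hx : x ∈ Ioo (-2:ℝ) 2) :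
    HasDerivAt (besselJ 1) (∑' j, bterm' j x) x := by
  have hfun : besselJ 1 = fun y => ∑' j, bterm j y := funext besselJ_one_eq
  rw [hfun]
  refine hasDerivAt_tsum_of_isPreconnected summable_u isOpen_Ioo
    (convex_Ioo _ _).isPreconnected (fun n y hy => bterm_hasDerivAt n y)
    (fun n y hy => ?_) (show (0:ℝ) ∈ Ioo (-2:ℝ) 2 by norm_num) ?_ hx
  · refine abs_bterm'_le n y ?_
    rcases hy with ⟨h1, h2⟩
    rw [abs_le]; constructor <;> linarith
  · have : (fun j => bterm j 0) = fun j => 0 := by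
      funext j; simp [bterm]
    rw [this]; exact summable_zero

lemma tsum_quarter_pow : ∑' j : ℕ, ((1:ℝ)/4) ^ (j + 1) = 1/3 := by
  rw [show (fun j : ℕ => ((1:ℝ)/4) ^ (j+1)) = fun j : ℕ => (1/4) * (1/4)^j from
    funext fun j => by ring]
  rw [tsum_mul_left, tsum_geometric_of_lt_one (by norm_num) (by norm_num)]
  norm_num

lemma summable_quarter : Summable (fun j : ℕ => ((1:ℝ)/4) ^ (j + 1)) :=
  (summable_geometric_of_lt_one (by norm_num) (by norm_num)).comp_injective
    (add_left_injective 1)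

lemma esq_le (e : ℝ) (he0 : 0 < e) (he1 : e < 1) : (e / 2) ^ 2 ≤ 1 / 4 := by
  nlinarith [mul_pos he0 (sub_pos.mpr he1)]

lemma besselJ_one_pos (e : ℝ) (he0 : 0 < e) (he1 : e < 1) : 0 < besselJ 1 e := by
  have habs : |e| ≤ 2 := by rw [abs_of_pos he0]; linarith
  have hS := summable_bterm e habs
  rw [besselJ_one_eq, hS.tsum_eq_zero_add]
  have h0 : bterm 0 e = e / 2 := by simp [bterm]
  have htail : |∑' j, bterm (j + 1) e| ≤ e / 6 := by
    have hb : ∀ j : ℕ, ‖bterm (j + 1) e‖ ≤ (e/2) * (1/4)^(j+1) := by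
      intro j
      rw [Real.norm_eq_abs, abs_bterm _ _ he0.le]
      have hc := fact_prod_one_le (j+1) (j+1+1)
      calc (e / 2) ^ (2 * (j+1) + 1) /
            ((Nat.factorial (j+1) : ℝ) * (Nat.factorial (j+1+1) : ℝ))
          ≤ (e / 2) ^ (2 * (j+1) + 1) := div_le_self (by positivity) hc
        _ = (e/2) * ((e/2)^2) ^ (j+1) := by rw [← pow_mul]; ring
        _ ≤ (e/2) * (1/4)^(j+1) := by
            gcongr
            exact esq_le e he0 he1
    have hsum : Summable (fun j : ℕ => (e/2) * (1/4:ℝ)^(j+1)) :=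
      summable_quarter.mul_left _
    calc |∑' j, bterm (j + 1) e| ≤ ∑' j, ‖bterm (j + 1) e‖ := by
          exact norm_tsum_le_tsum_norm ((summable_nat_add_iff 1).2 hS).norm
      _ ≤ ∑' j : ℕ, (e/2) * (1/4)^(j+1) :=
          Summable.tsum_le_tsum hb ((summable_nat_add_iff 1).2 hS).norm hsum
      _ = (e/2) * (1/3) := by rw [tsum_mul_left, tsum_quarter_pow]
      _ = e / 6 := by ring
  rw [h0]
  have := abs_le.mp htail
  linarith [this.1]

lemma deriv_besselJ_one_pos (e : ℝ) (he0 : 0 < e) (he1 : e < 1) :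
    0 < deriv (besselJ 1) e := by
  have hmem : e ∈ Ioo (-2:ℝ) 2 := ⟨by linarith, by linarith⟩
  have hd := besselJ_one_hasDerivAt e hmem
  have habs : |e| ≤ 2 := by rw [abs_of_pos he0]; linarith
  have hS := summable_bterm' e habs
  rw [hd.deriv, hS.tsum_eq_zero_add]
  have h0 : bterm' 0 e = 1 / 2 := by simp [bterm']
  have htail : |∑' j, bterm' (j + 1) e| ≤ 1 / 3 := by
    have hb : ∀ j : ℕ, ‖bterm' (j + 1) e‖ ≤ (1/4:ℝ)^(j+1) := by
      intro j
      rw [Real.norm_eq_abs, abs_bterm']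
      have hc : (0:ℝ) < (Nat.factorial (j+1) : ℝ) * (Nat.factorial (j+1+1) : ℝ) := by
        positivity
      have hfact : (2 * ((j:ℝ)+1) + 1) * (1/2) ≤
          (Nat.factorial (j+1) : ℝ) * (Nat.factorial (j+1+1) : ℝ) := by
        have h1 : 2 * (j+1) + 1 ≤ 2 * (Nat.factorial (j+1) * Nat.factorial (j+2)) := by
          have h2 := Nat.self_le_factorial (j + 2)
          have h3 := Nat.one_le_iff_ne_zero.mpr (Nat.factorial_ne_zero (j+1))
          nlinarith
        have h1' : (2 * ((j:ℝ)+1) + 1) ≤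
            2 * ((Nat.factorial (j+1) : ℝ) * (Nat.factorial (j+2) : ℝ)) := by
          exact_mod_cast h1
        have : ((j:ℕ)+1+1) = j + 2 := by ring
        rw [this]
        linarith
      have hpow : |e/2| ^ (2 * (j+1)) ≤ (1/4:ℝ)^(j+1) := by
        rw [abs_of_pos (by linarith : (0:ℝ) < e/2), pow_mul]
        exact pow_le_pow_left₀ (by positivity) (esq_le e he0 he1) _
      rw [div_le_iff₀ hc]
      have hstep : (2 * (↑(j+1):ℝ) + 1) * |e / 2| ^ (2 * (j+1)) * (1 / 2)
          = ((2 * ((j:ℝ)+1) + 1) * (1/2)) * |e/2| ^ (2 * (j+1)) := by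
        push_cast; ring
      rw [hstep]
      calc ((2 * ((j:ℝ)+1) + 1) * (1/2)) * |e/2| ^ (2 * (j+1))
          ≤ ((Nat.factorial (j+1) : ℝ) * (Nat.factorial (j+1+1) : ℝ)) * (1/4)^(j+1) :=
            mul_le_mul hfact hpow (by positivity) hc.le
        _ = (1/4)^(j+1) * ((Nat.factorial (j+1) : ℝ) * (Nat.factorial (j+1+1) : ℝ)) := by
            ring
    calc |∑' j, bterm' (j + 1) e| ≤ ∑' j, ‖bterm' (j + 1) e‖ :=
          norm_tsum_le_tsum_norm ((summable_nat_add_iff 1).2 hS).norm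
      _ ≤ ∑' j : ℕ, (1/4:ℝ)^(j+1) :=
          Summable.tsum_le_tsum hb ((summable_nat_add_iff 1).2 hS).norm summable_quarter
      _ = 1/3 := tsum_quarter_pow
  rw [h0]
  have := abs_le.mp htail
  linarith [this.1]

/-- `K₊¹(e) < 0` for all `0 < e < 1`. -/
theorem stmt18 (e : ℝ) (he0 : 0 < e) (he1 : e < 1) :
    Kplus 1 e < 0 := by
  set J := besselJ 1 e with hJdef
  set D := deriv (besselJ 1) e with hDdef
  have hJ : 0 < J := besselJ_one_pos e he0 he1
  have hD : 0 < D := deriv_besselJ_one_pos e he0 he1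
  set η := Real.sqrt (1 - e ^ 2) with hηdef
  have h1e : (0:ℝ) < 1 - e ^ 2 := by nlinarith
  have hη0 : 0 < η := Real.sqrt_pos.mpr h1e
  have hη2 : η ^ 2 = 1 - e ^ 2 := Real.sq_sqrt h1e.le
  have hη1 : η < 1 := by
    nlinarith [hη2, hη0]
  have hkey : Kplus 1 e = (2 / e ^ 2) * ((η - 1) * (2 * e * η * D + (2 * η^2 + η + 1) * J)) := by
    unfold Kplus besselA besselB
    rw [Nat.cast_one, one_mul, one_mul, ← hJdef, ← hDdef, ← hηdef, ← hη2]
    field_simp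
    linear_combination (4 * J) * hη2
  rw [hkey]
  have hb : 0 < 2 * e * η * D + (2 * η^2 + η + 1) * J := by positivity
  have hneg : (η - 1) * (2 * e * η * D + (2 * η^2 + η + 1) * J) < 0 :=
    mul_neg_of_neg_of_pos (by linarith) hb
  have hc : (0:ℝ) < 2 / e ^ 2 := by positivity
  exact mul_neg_of_pos_of_neg hc hneg
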